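/- Let A, B, C be the vertices of a nondegenerate triangle in the plane and let E be a point of the side AB such that the line through C and E bisects the interior angle of the triangle at C. Then ‖C−B‖ > ‖B−E‖. -/
import Mathlib


noncomputable section

/-- Points of the plane with the Euclidean norm. -/
abbrev Pt : Type := EuclideanSpace ℝ (Fin 2)

/-- The closed disk with diameter the segment `pq`: center `(p+q)/2`, radius `‖p-q‖/2`. -/
def disk (p q : Pt) : Set Pt := Metric.closedBall (midpoint ℝ p q) (dist p q / 2)

set_option maxHeartbeats 1000000 in
/-- In a nondegenerate triangle ABC, if CE is the interior angle bisector at C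
with E on side AB, then ‖C-B‖ > ‖B-E‖. -/
theorem stmt15 (A B C E : Pt) (hnd : ¬ Collinear ℝ ({A, B, C} : Set Pt))
    (hE : E ∈ segment ℝ A B)
    (hbis : InnerProductGeometry.angle (E - C) (A - C) =
      InnerProductGeometry.angle (E - C) (B - C)) :
    dist B E < dist C B := by
  set u : Pt := A - C with hu_def
  set v : Pt := B - C with hv_def
  -- linear dependence of u, v would give collinearity
  have hne : ∀ r : ℝ, u ≠ r • v := by
    intro r hr
    apply hnd
    rw [collinear_iff_of_mem (show C ∈ ({A, B, C} : Set Pt) by simp)]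
    refine ⟨v, ?_⟩
    intro p hp
    simp only [Set.mem_insert_iff, Set.mem_singleton_iff] at hp
    rcases hp with rfl | rfl | rfl
    · refine ⟨r, ?_⟩
      rw [vadd_eq_add, ← hr, hu_def]
      abel
    · exact ⟨1, by rw [vadd_eq_add, one_smul, hv_def]; abel⟩
    · exact ⟨0, by simp⟩
  have hBC : B ≠ C := by
    intro h
    exact hnd (Collinear.subset (by rw [h]; intro x hx; simpa using hx)
      (collinear_pair ℝ A C))
  have hv0 : v ≠ 0 := sub_ne_zero.mpr hBC
  have hu0 : u ≠ 0 := fun h => hne 0 (by simpa using h)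
  obtain ⟨p, q, hp, hq, hpq, hEeq⟩ := hE
  obtain rfl : q = 1 - p := by linarith
  have hEC : E - C = p • u + (1 - p) • v := by
    rw [← hEeq, hu_def, hv_def]
    module
  have hECne : E - C ≠ 0 := by
    rw [hEC]
    intro h
    rcases eq_or_ne p 0 with hp0 | hp0
    · rw [hp0] at h
      simp at h
      exact hv0 h
    · apply hne (-(p⁻¹ * (1 - p)))
      have hpu : p • u = -((1 - p) • v) := by
        rw [eq_neg_iff_add_eq_zero]; exact h
      calc u = p⁻¹ • (p • u) := by rw [smul_smul, inv_mul_cancel₀ hp0, one_smul]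
        _ = -(p⁻¹ * (1 - p)) • v := by rw [hpu, smul_neg, smul_smul, neg_smul]
  -- names for the norms
  set a : ℝ := ‖v‖ with ha_def
  set b : ℝ := ‖u‖ with hb_def
  set s : ℝ := inner (𝕜 := ℝ) u v with hs_def
  have ha0 : 0 < a := norm_pos_iff.mpr hv0
  have hb0 : 0 < b := norm_pos_iff.mpr hu0
  have hn0 : 0 < ‖E - C‖ := norm_pos_iff.mpr hECne
  -- equal cosines
  have hcos := congrArg Real.cos hbis
  rw [InnerProductGeometry.cos_angle, InnerProductGeometry.cos_angle] at hcos
  have h1 : inner (𝕜 := ℝ) (E - C) u = p * b ^ 2 + (1 - p) * s := by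
    rw [hEC, inner_add_left, real_inner_smul_left, real_inner_smul_left,
      real_inner_self_eq_norm_sq, real_inner_comm u v, ← hs_def, ← hb_def]
    try ring
  have h2 : inner (𝕜 := ℝ) (E - C) v = p * s + (1 - p) * a ^ 2 := by
    rw [hEC, inner_add_left, real_inner_smul_left, real_inner_smul_left,
      real_inner_self_eq_norm_sq, ← hs_def, ← ha_def]
    try ring
  have hcos' : (inner (𝕜 := ℝ) (E - C) u) * (‖E - C‖ * ‖v‖) =
      (inner (𝕜 := ℝ) (E - C) v) * (‖E - C‖ * ‖u‖) := by
    rw [div_eq_div_iff (by positivity) (by positivity)] at hcos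
    exact hcos
  rw [h1, h2, ← ha_def, ← hb_def] at hcos'
  -- strict Cauchy-Schwarz
  have hslt : s < b * a := by
    rw [hs_def, hb_def, ha_def]
    rw [inner_lt_norm_mul_iff_real]
    intro h
    apply hne (b / a)
    rw [div_eq_inv_mul, ← smul_smul, ← h, smul_smul, inv_mul_cancel₀ (ne_of_gt ha0), one_smul]
  -- angle bisector theorem: p * b = (1-p) * a
  have hfac : (p * b - (1 - p) * a) * (a * b - s) = 0 := by
    have h3 : ‖E - C‖ * ((p * b - (1 - p) * a) * (a * b - s)) = 0 := by
      linear_combination hcos'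
    exact (mul_eq_zero.mp h3).resolve_left (ne_of_gt hn0)
  have hkey : p * b = (1 - p) * a := by
    rcases mul_eq_zero.mp hfac with h | h
    · linarith
    · nlinarith
  have hp_pos : 0 < p := by
    rcases hp.lt_or_eq with h | h
    · exact h
    · exfalso
      rw [← h] at hkey
      linarith
  -- strict triangle inequality
  have hlt : ‖v - u‖ < a + b := by
    have hns : ¬ SameRay ℝ v (-u) := by
      intro h
      rcases h.exists_pos hv0 (neg_ne_zero.mpr hu0) with ⟨r, s', hr, hs', hrs⟩
      apply hne (-(s'⁻¹ * r))
      have h' : s' • u = -(r • v) := by rw [← neg_neg (s' • u), ← smul_neg, ← hrs]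
      calc u = s'⁻¹ • (s' • u) := by rw [smul_smul, inv_mul_cancel₀ (ne_of_gt hs'), one_smul]
        _ = -(s'⁻¹ * r) • v := by rw [h', smul_neg, smul_smul, neg_smul]
    calc ‖v - u‖ = ‖v + -u‖ := by rw [sub_eq_add_neg]
      _ < ‖v‖ + ‖-u‖ := norm_add_lt_of_not_sameRay hns
      _ = a + b := by rw [norm_neg]
  have hBE : B - E = p • (v - u) := by
    rw [← hEeq, hu_def, hv_def]
    module
  have hdBE : dist B E = p * ‖v - u‖ := by
    rw [dist_eq_norm, hBE, norm_smul, Real.norm_eq_abs, abs_of_pos hp_pos]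
  have hdCB : dist C B = a := by
    rw [dist_eq_norm, ha_def, hv_def, ← norm_neg]
    congr 1
    abel
  rw [hdBE, hdCB]
  nlinarith [mul_lt_mul_of_pos_left hlt hp_pos]
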